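/- Let G ≤ Iso(ℝⁿ) act transitively on ℝⁿ, and let G' be a normal subgroup of G such that for every x ∈ ℝⁿ the G'-orbit of x is an affine subspace of ℝⁿ. Then all G'-orbits are pairwise parallel: there is a single linear subspace V ⊆ ℝⁿ such that the G'-orbit of x equals x + V for every x ∈ ℝⁿ. -/

import Mathlib

private lemma aux_linear_bound {E : Type*} [NormedAddCommGroup E] [NormedSpace ℝ E]
    (u v : E) (C : ℝ) (h : ∀ t : ℝ, ‖u + t • v‖ ≤ C) : v = 0 := by
  by_contra hne
  have hpos : 0 < ‖v‖ := norm_pos_iff.2 hne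
  have hC : 0 ≤ C := le_trans (norm_nonneg _) (by simpa using h 0)
  set t := (C + ‖u‖ + 1) / ‖v‖ with ht
  have htpos : 0 ≤ t := by positivity
  have h1 : ‖t • v‖ ≤ ‖u + t • v‖ + ‖u‖ := by
    simpa using norm_sub_le (u + t • v) u
  have h2 : ‖t • v‖ = C + ‖u‖ + 1 := by
    rw [norm_smul, Real.norm_eq_abs, abs_of_nonneg htpos, ht,
      div_mul_cancel₀ _ (ne_of_gt hpos)]
  have := (h1.trans (add_le_add_left (h t) _))
  rw [h2] at this
  linarith

/-- If `G` is a transitive subgroup of the isometry group of `ℝⁿ` and `G'` is a normal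
subgroup of `G` all of whose orbits are affine subspaces, then all `G'`-orbits are
pairwise parallel affine subspaces: there is a single linear subspace `V` such that the
orbit of every `x` equals `x + V`. -/
theorem stmt7 (n : ℕ) (hn : 1 ≤ n)
    (G G' : Subgroup (EuclideanSpace ℝ (Fin n) ≃ᵢ EuclideanSpace ℝ (Fin n)))
    (htrans : ∀ x y : EuclideanSpace ℝ (Fin n), ∃ g ∈ G, g x = y)
    (hle : G' ≤ G)
    (hnormal : ∀ g ∈ G, ∀ k ∈ G', g * k * g⁻¹ ∈ G')
    (haff : ∀ x : EuclideanSpace ℝ (Fin n),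
      ∃ (p : EuclideanSpace ℝ (Fin n)) (V : Submodule ℝ (EuclideanSpace ℝ (Fin n))),
        {y | ∃ k ∈ G', k x = y} = (fun v => p + v) '' (V : Set (EuclideanSpace ℝ (Fin n)))) :
    ∃ V : Submodule ℝ (EuclideanSpace ℝ (Fin n)),
      ∀ x : EuclideanSpace ℝ (Fin n),
        {y | ∃ k ∈ G', k x = y} = (fun v => x + v) '' (V : Set (EuclideanSpace ℝ (Fin n))) := by
  classical
  set E := EuclideanSpace ℝ (Fin n) with hE
  -- normalize the base point of each orbit to x itself
  have horb : ∀ x : E, ∃ V : Submodule ℝ E,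
      {y | ∃ k ∈ G', k x = y} = (fun v => x + v) '' (V : Set E) := by
    intro x
    obtain ⟨p, V, hpV⟩ := haff x
    refine ⟨V, ?_⟩
    have hx : x ∈ {y | ∃ k ∈ G', k x = y} := ⟨1, G'.one_mem, rfl⟩
    rw [hpV] at hx
    obtain ⟨v0, hv0, hv0x⟩ := hx
    rw [hpV]
    ext y
    constructor
    · rintro ⟨v, hv, rfl⟩
      exact ⟨v - v0, V.sub_mem hv hv0, by simp only [← hv0x]; abel⟩
    · rintro ⟨v, hv, rfl⟩
      exact ⟨v0 + v, V.add_mem hv0 hv, by simp only [← hv0x]; abel⟩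
  choose V hV using horb
  -- key: all directions coincide
  have key : ∀ x z : E, V z ≤ V x := by
    intro x z w hw
    set C := dist z x with hC
    have hbound : ∀ t : ℝ, ∃ v ∈ V x, dist (z + t • w) (x + v) ≤ C := by
      intro t
      have hz : z + t • w ∈ {y | ∃ k ∈ G', k z = y} := by
        rw [hV z]; exact ⟨t • w, Submodule.smul_mem _ _ hw, rfl⟩
      obtain ⟨k, hk, hkz⟩ := hz
      have hkx : k x ∈ {y | ∃ k' ∈ G', k' x = y} := ⟨k, hk, rfl⟩
      rw [hV x] at hkx
      obtain ⟨v, hv, hvx⟩ := hkx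
      refine ⟨v, hv, ?_⟩
      have hvx' : x + v = k x := hvx
      rw [hvx', ← hkz, k.dist_eq]
    set P := Submodule.orthogonalProjectionOnto (V x)ᗮ with hP
    have hproj : ∀ t : ℝ, ‖((P (z - x) : E) + t • (P w : E))‖ ≤ C := by
      intro t
      obtain ⟨v, hv, hd⟩ := hbound t
      have h1 : P v = 0 :=
        Submodule.orthogonalProjectionOnto_apply_of_mem_orthogonal
          ((V x).le_orthogonal_orthogonal hv)
      have h2 : P (z + t • w - (x + v)) = P (z - x) + t • P w := by
        have heq : z + t • w - (x + v) = (z - x) + t • w - v := by abel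
        rw [heq, map_sub, map_add, map_smul, h1, sub_zero]
      have h3 : (P (z - x) : E) + t • (P w : E)
          = ((P (z + t • w - (x + v)) : ↥(V x)ᗮ) : E) := by
        rw [h2, Submodule.coe_add, Submodule.coe_smul]
      rw [h3]
      calc ‖((P (z + t • w - (x + v)) : ↥(V x)ᗮ) : E)‖
          = ‖P (z + t • w - (x + v))‖ := rfl
        _ ≤ ‖P‖ * ‖z + t • w - (x + v)‖ := P.le_opNorm _
        _ ≤ 1 * ‖z + t • w - (x + v)‖ :=
            mul_le_mul_of_nonneg_right (Submodule.orthogonalProjectionOnto_norm_le _) (norm_nonneg _)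
        _ = dist (z + t • w) (x + v) := by rw [one_mul, dist_eq_norm]
        _ ≤ C := hd
    have hPw : (P w : E) = 0 := aux_linear_bound _ _ C hproj
    have hPw' : P w = 0 := Submodule.coe_eq_zero.mp hPw
    have hmem : w ∈ (V x)ᗮᗮ := Submodule.orthogonalProjectionOnto_eq_zero_iff.1 hPw'
    rwa [Submodule.orthogonal_orthogonal] at hmem
  refine ⟨V 0, fun x => ?_⟩
  have hVx : V x = V 0 := le_antisymm (key 0 x) (key x 0)
  rw [hV x, hVx]
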